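/- T-equivalence of anchored diagrams is a monoidal congruence: if [Γ] ~_T [Γ'] and [Υ] ~_T [Υ'] then [Υ] ⊗ [Γ] ~_T [Υ'] ⊗ [Γ'], and if the compositions are defined, [Υ] ∘ [Γ] ~_T [Υ'] ∘ [Γ']. -/

import Mathlib

open CategoryTheory MonoidalCategory

/- We work in an abstract symmetric monoidal category `C` (standing for the free
symmetric monoidal category `F_s(G)` of anchored diagrams). A symmetric set of
templates is a family `T` of pairs of parallel morphisms. By the decomposition of
surgeries (Lemma `sur:decom`), performing a `T`-surgery on a morphism means
rewriting `g ≫ (ω ▷ Z) ≫ h` to `g ≫ (lam ▷ Z) ≫ h` for some template `(ω, lam)`,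
where `Z` collects the untouched strands. -/

/-- One `T`-surgery step. -/
def SurgeryStep {C : Type*} [Category C] [MonoidalCategory C]
    (T : ∀ ⦃X Y : C⦄, (X ⟶ Y) → (X ⟶ Y) → Prop)
    ⦃X Y : C⦄ (f f' : X ⟶ Y) : Prop :=
  ∃ (A B Z : C) (g : X ⟶ A ⊗ Z) (ω lam : A ⟶ B) (h : B ⊗ Z ⟶ Y),
    T ω lam ∧ f = g ≫ (ω ▷ Z) ≫ h ∧ f' = g ≫ (lam ▷ Z) ≫ h

/-- `T`-equivalence: a finite sequence of `T`-surgeries. -/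
def TEquiv {C : Type*} [Category C] [MonoidalCategory C]
    (T : ∀ ⦃X Y : C⦄, (X ⟶ Y) → (X ⟶ Y) → Prop)
    ⦃X Y : C⦄ : (X ⟶ Y) → (X ⟶ Y) → Prop :=
  Relation.ReflTransGen (fun f f' => SurgeryStep T f f')

section Aux
variable {C : Type*} [Category C] [MonoidalCategory C]
    (T : ∀ ⦃X Y : C⦄, (X ⟶ Y) → (X ⟶ Y) → Prop)

lemma SurgeryStep.comp_left {X Y X' : C} {f f' : X ⟶ Y} (e : X' ⟶ X)
    (h : SurgeryStep T f f') : SurgeryStep T (e ≫ f) (e ≫ f') := by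
  obtain ⟨A, B, Z, g, ω, lam, k, ht, h1, h2⟩ := h
  exact ⟨A, B, Z, e ≫ g, ω, lam, k, ht, by simp [h1], by simp [h2]⟩

lemma SurgeryStep.comp_right {X Y Y' : C} {f f' : X ⟶ Y} (e : Y ⟶ Y')
    (h : SurgeryStep T f f') : SurgeryStep T (f ≫ e) (f' ≫ e) := by
  obtain ⟨A, B, Z, g, ω, lam, k, ht, h1, h2⟩ := h
  exact ⟨A, B, Z, g, ω, lam, k ≫ e, ht, by simp [h1], by simp [h2]⟩

lemma SurgeryStep.whiskerRight {X Y : C} {f f' : X ⟶ Y} (W : C)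
    (h : SurgeryStep T f f') : SurgeryStep T (f ▷ W) (f' ▷ W) := by
  obtain ⟨A, B, Z, g, ω, lam, k, ht, h1, h2⟩ := h
  refine ⟨A, B, Z ⊗ W, (g ▷ W) ≫ (α_ A Z W).hom, ω, lam,
    (α_ B Z W).inv ≫ (k ▷ W), ht, ?_, ?_⟩ <;>
  · subst h1; subst h2
    simp [whisker_assoc]

lemma SurgeryStep.whiskerLeft [SymmetricCategory C] {X Y : C} {f f' : X ⟶ Y} (W : C)
    (h : SurgeryStep T f f') : SurgeryStep T (W ◁ f) (W ◁ f') := by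
  have h1 : SurgeryStep T ((β_ W X).hom ≫ (f ▷ W) ≫ (β_ W Y).inv)
      ((β_ W X).hom ≫ (f' ▷ W) ≫ (β_ W Y).inv) := by
    refine SurgeryStep.comp_left T _ ?_
    exact SurgeryStep.comp_right T _ (SurgeryStep.whiskerRight T W h)
  convert h1 using 1 <;>
  · rw [← cancel_mono (β_ W Y).hom]
    simp [BraidedCategory.braiding_naturality_right]
end Aux

/-- `T`-equivalence of (isomorphism classes of) anchored diagrams is
a monoidal congruence: it is compatible with the monoidal product and with
composition. -/
theorem tEquiv_monoidal_congruence {C : Type*} [Category C] [MonoidalCategory C]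
    [SymmetricCategory C]
    (T : ∀ ⦃X Y : C⦄, (X ⟶ Y) → (X ⟶ Y) → Prop)
    (hsymm : ∀ ⦃X Y : C⦄ (f g : X ⟶ Y), T f g → T g f) :
    (∀ {X Y Z W : C} (f f' : X ⟶ Y) (u u' : Z ⟶ W),
        TEquiv T f f' → TEquiv T u u' → TEquiv T (u ⊗ₘ f) (u' ⊗ₘ f')) ∧
    (∀ {X Y Z : C} (f f' : X ⟶ Y) (u u' : Y ⟶ Z),
        TEquiv T f f' → TEquiv T u u' → TEquiv T (f ≫ u) (f' ≫ u')) := by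
  have lift : ∀ {X Y X' Y' : C} {f f' : X ⟶ Y}
      (F : (X ⟶ Y) → (X' ⟶ Y')) (hF : ∀ {a b : X ⟶ Y}, SurgeryStep T a b → SurgeryStep T (F a) (F b)),
      TEquiv T f f' → TEquiv T (F f) (F f') := by
    intro X Y X' Y' f f' F hF h
    induction h with
    | refl => exact Relation.ReflTransGen.refl
    | tail _ hstep ih => exact Relation.ReflTransGen.tail ih (hF hstep)
  have hcomp : ∀ {X Y Z : C} (f f' : X ⟶ Y) (u u' : Y ⟶ Z),
      TEquiv T f f' → TEquiv T u u' → TEquiv T (f ≫ u) (f' ≫ u') := by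
    intro X Y Z f f' u u' hf hu
    refine Relation.ReflTransGen.trans
      (lift (· ≫ u) (fun h => SurgeryStep.comp_right T u h) hf)
      (lift (f' ≫ ·) (fun h => SurgeryStep.comp_left T f' h) hu)
  refine ⟨?_, hcomp⟩
  intro X Y Z W f f' u u' hf hu
  rw [MonoidalCategory.tensorHom_def, MonoidalCategory.tensorHom_def]
  exact hcomp _ _ _ _
    (lift (· ▷ X) (fun h => SurgeryStep.whiskerRight T X h) hu)
    (lift (W ◁ ·) (fun h => SurgeryStep.whiskerLeft T W h) hf)
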